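/- Let w = exp(xX + Σ y_i Y_i) ∈ G_{n+1} and W = aX + Σ b_i Y_i ∈ g_{n+1}, with g_{n+1} realized as (n+1)×(n+1) matrices as above. Then Ad_w W := w W w^{-1} lies in g_{n+1}, with the same X-component a, and its Y_j-components ξ_j are given by ξ_j = b_j + Σ_{k=1}^{j-1} (x^{k-1}/k!)(x b_{j-k} - a y_{j-k}). -/

import Mathlib

open scoped Nat

/-- The matrix realization of `W = a·X + Σ_{i=1}^n b_i·Y_i` in `g_{n+1}`:
`a` at positions `(i, i+1)` for `i ≤ n-2` and last-column entries `b_{n-i}` at `(i, n)`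
(0-indexed), with `b : Fin n → ℝ`, `b k ↦ b_{k+1}`. -/
def lieMat (n : ℕ) (a : ℝ) (b : Fin n → ℝ) : Matrix (Fin (n + 1)) (Fin (n + 1)) ℝ :=
  Matrix.of fun i j =>
    if (j : ℕ) = n then (if h : (i : ℕ) < n then b ⟨n - 1 - i, by omega⟩ else 0)
    else if (j : ℕ) = (i : ℕ) + 1 then a
    else 0

namespace AdAux

lemma fcongr {n : ℕ} (f : Fin n → ℝ) {p q : ℕ} (hp : p < n) (hq : q < n) (h : p = q) :
    f ⟨p, hp⟩ = f ⟨q, hq⟩ := by subst h; rfl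

/-- Closed form for `(lieMat n x y)^k`, valid for `k ≥ 1`. -/
def Mpow (n : ℕ) (x : ℝ) (y : Fin n → ℝ) (k : ℕ) : Matrix (Fin (n + 1)) (Fin (n + 1)) ℝ :=
  Matrix.of fun i j =>
    if (j : ℕ) = n then
      (if h : (i : ℕ) + k ≤ n ∧ 1 ≤ k then x ^ (k - 1) * y ⟨n - i - k, by omega⟩ else 0)
    else if (j : ℕ) = (i : ℕ) + k then x ^ k else 0

variable {n : ℕ}

lemma Mpow_one (x : ℝ) (y : Fin n → ℝ) : Mpow n x y 1 = lieMat n x y := by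
  ext i j
  simp only [Mpow, lieMat, Matrix.of_apply]
  by_cases hj : (j : ℕ) = n
  · rw [if_pos hj, if_pos hj]
    by_cases hi : (i : ℕ) < n
    · rw [dif_pos (show (i : ℕ) + 1 ≤ n ∧ 1 ≤ 1 by omega), dif_pos hi, pow_zero, one_mul]
      exact fcongr y _ _ (by omega)
    · rw [dif_neg (by omega), dif_neg hi]
  · simp only [hj, if_false, pow_one]

lemma Mpow_last_row (x : ℝ) (y : Fin n → ℝ) (k : ℕ) (j : Fin (n + 1)) :
    Mpow n x y k (Fin.last n) j = 0 := by
  simp only [Mpow, Matrix.of_apply, Fin.val_last]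
  by_cases hj : (j : ℕ) = n
  · rw [if_pos hj, dif_neg (by omega)]
  · rw [if_neg hj, if_neg (by have := j.isLt; omega)]

lemma lieMat_last_row (a : ℝ) (b : Fin n → ℝ) (j : Fin (n + 1)) :
    lieMat n a b (Fin.last n) j = 0 := by
  simp only [lieMat, Matrix.of_apply, Fin.val_last]
  by_cases hj : (j : ℕ) = n
  · rw [if_pos hj, dif_neg (by omega)]
  · rw [if_neg hj, if_neg (by have := j.isLt; omega)]

lemma lieMat_pow_succ (x : ℝ) (y : Fin n → ℝ) (k : ℕ) :
    lieMat n x y ^ (k + 1) = Mpow n x y (k + 1) := by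
  induction k with
  | zero => rw [pow_one, Mpow_one]
  | succ k ih =>
    rw [pow_succ', ih]
    ext i j
    rw [Matrix.mul_apply]
    by_cases hi : (i : ℕ) < n
    · rw [Finset.sum_eq_single (⟨(i : ℕ) + 1, by omega⟩ : Fin (n + 1))]
      · by_cases hin : (i : ℕ) + 1 = n
        · have hlast : (⟨(i : ℕ) + 1, by omega⟩ : Fin (n + 1)) = Fin.last n := by
            simp only [Fin.ext_iff, Fin.val_last]; omega
          rw [hlast, Mpow_last_row, mul_zero]
          simp only [Mpow, Matrix.of_apply]
          by_cases hj : (j : ℕ) = n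
          · rw [if_pos hj, dif_neg (by omega)]
          · rw [if_neg hj, if_neg (by have := j.isLt; omega)]
        · have hE : lieMat n x y i ⟨(i : ℕ) + 1, by omega⟩ = x := by
            simp only [lieMat, Matrix.of_apply]
            rw [if_neg (by simpa using hin)]; simp
          rw [hE]
          simp only [Mpow, Matrix.of_apply]
          by_cases hj : (j : ℕ) = n
          · rw [if_pos hj, if_pos hj]
            by_cases hc : (i : ℕ) + (k + 2) ≤ n
            · rw [dif_pos (show (i : ℕ) + 1 + (k + 1) ≤ n ∧ 1 ≤ k + 1 by omega),
                dif_pos (show (i : ℕ) + (k + 2) ≤ n ∧ 1 ≤ k + 2 by omega)]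
              rw [fcongr y _ _ (show n - ((i : ℕ) + 1) - (k + 1) = n - (i : ℕ) - (k + 2) by omega)]
              simp only [Nat.add_sub_cancel]
              ring
              omega
            · rw [dif_neg (by omega), dif_neg (by omega), mul_zero]
          · rw [if_neg hj, if_neg hj]
            by_cases hc : (j : ℕ) = (i : ℕ) + (k + 2)
            · rw [if_pos (by omega), if_pos hc]
              ring
            · rw [if_neg (by omega), if_neg hc, mul_zero]
      · intro m _ hm
        by_cases hmn : (m : ℕ) = n
        · have : m = Fin.last n := by simp only [Fin.ext_iff, Fin.val_last]; exact hmn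
          rw [this, Mpow_last_row, mul_zero]
        · have : lieMat n x y i m = 0 := by
            simp only [lieMat, Matrix.of_apply]
            rw [if_neg hmn, if_neg (by
              intro h
              exact hm (by simp only [Fin.ext_iff]; exact h))]
          rw [this, zero_mul]
      · intro h; exact absurd (Finset.mem_univ _) h
    · have hi' : (i : ℕ) = n := by have := i.isLt; omega
      have hlast : i = Fin.last n := by simp only [Fin.ext_iff, Fin.val_last]; exact hi'
      rw [hlast]
      rw [Finset.sum_eq_zero (fun m _ => by rw [lieMat_last_row, zero_mul]), Mpow_last_row]

lemma Mpow_top (x : ℝ) (y : Fin n → ℝ) : Mpow n x y (n + 1) = 0 := by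
  ext i j
  simp only [Mpow, Matrix.of_apply, Matrix.zero_apply]
  by_cases hj : (j : ℕ) = n
  · rw [if_pos hj, dif_neg (by omega)]
  · rw [if_neg hj, if_neg (by have := j.isLt; omega)]

lemma exp_eq_sum (x : ℝ) (y : Fin n → ℝ) :
    NormedSpace.exp (lieMat n x y) =
      ∑ k ∈ Finset.range (n + 1), ((k ! : ℝ)⁻¹) • lieMat n x y ^ k := by
  rw [NormedSpace.exp_eq_tsum (𝕂 := ℝ)]
  refine tsum_eq_sum ?_
  intro k hk
  have hk' : n + 1 ≤ k := by
    by_contra h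
    exact hk (Finset.mem_range.2 (by omega))
  have h0 : lieMat n x y ^ (n + 1) = 0 := by
    rw [lieMat_pow_succ]; exact Mpow_top x y
  have : lieMat n x y ^ k = 0 := by
    calc lieMat n x y ^ k = lieMat n x y ^ (n + 1) * lieMat n x y ^ (k - (n + 1)) := by
          rw [← pow_add]; congr 1; omega
      _ = 0 := by rw [h0, zero_mul]
  rw [this, smul_zero]

/-- Closed form of `exp (lieMat n x y)`. -/
noncomputable def Emat (n : ℕ) (x : ℝ) (y : Fin n → ℝ) : Matrix (Fin (n + 1)) (Fin (n + 1)) ℝ :=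
  Matrix.of fun i j =>
    if hj : (j : ℕ) = n then
      (if hi : (i : ℕ) = n then 1
       else ∑ k ∈ Finset.range (n - i),
         x ^ k / (k + 1)! * y ⟨n - 1 - i - k, by have := i.isLt; omega⟩)
    else if (i : ℕ) ≤ (j : ℕ) then x ^ ((j : ℕ) - i) / ((j : ℕ) - i)! else 0

lemma exp_eq_Emat (x : ℝ) (y : Fin n → ℝ) :
    NormedSpace.exp (lieMat n x y) = Emat n x y := by
  rw [exp_eq_sum]
  ext i j
  rw [Matrix.sum_apply]
  simp only [Matrix.smul_apply, smul_eq_mul]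
  rw [Finset.sum_range_succ']
  simp only [pow_zero, Nat.factorial_zero, Nat.cast_one, inv_one, one_mul]
  have hpow : ∀ k, lieMat n x y ^ (k + 1) = Mpow n x y (k + 1) := lieMat_pow_succ x y
  simp only [hpow]
  simp only [Emat, Mpow, Matrix.of_apply]
  by_cases hj : (j : ℕ) = n
  · rw [dif_pos hj]
    simp only [hj, if_true]
    by_cases hi : (i : ℕ) = n
    · rw [dif_pos hi]
      have hij : i = j := Fin.ext (by rw [hi, hj])
      subst hij
      rw [Matrix.one_apply_eq]
      rw [Finset.sum_eq_zero, zero_add]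
      intro k _
      rw [dif_neg (by omega), mul_zero]
    · rw [dif_neg hi]
      have hij : ¬ i = j := fun h => hi (by rw [h, hj])
      rw [Matrix.one_apply_ne hij, add_zero]
      have hin : (i : ℕ) < n := by have := i.isLt; omega
      have hsub : Finset.range (n - (i:ℕ)) ⊆ Finset.range n := by
        apply Finset.range_subset_range.2; omega
      refine ((Finset.sum_subset hsub fun k hk hk2 => ?_).symm).trans
        (Finset.sum_congr rfl fun k hk => ?_)
      · simp only [Finset.mem_range] at hk hk2
        rw [dif_neg (by omega), mul_zero]
      simp only [Finset.mem_range] at hk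
      rw [dif_pos (show (i:ℕ) + (k+1) ≤ n ∧ 1 ≤ k + 1 by omega)]
      rw [fcongr y _ _ (show n - (i:ℕ) - (k+1) = n - 1 - (i:ℕ) - k by omega)]
      simp only [Nat.add_sub_cancel]
      rw [div_eq_mul_inv]
      ring
      omega
  · rw [dif_neg hj]
    simp only [hj, if_false]
    by_cases hij : (i : ℕ) ≤ (j : ℕ)
    · rw [if_pos hij]
      by_cases hieq : (i : ℕ) = (j : ℕ)
      · have : i = j := Fin.ext hieq
        subst this
        rw [Matrix.one_apply_eq]
        rw [Finset.sum_eq_zero, zero_add]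
        · simp [hieq]
        · intro k _
          rw [if_neg (by omega), mul_zero]
      · have hlt : (i : ℕ) < (j : ℕ) := by omega
        have hjn : (j : ℕ) < n := by have := j.isLt; omega
        rw [Matrix.one_apply_ne (fun h => hieq (by rw [h])), add_zero]
        rw [Finset.sum_eq_single ((j : ℕ) - (i : ℕ) - 1)]
        · rw [if_pos (by omega)]
          rw [show (j:ℕ) - (i:ℕ) - 1 + 1 = (j:ℕ) - (i:ℕ) by omega]
          rw [div_eq_mul_inv]
          ring
        · intro k _ hk
          rw [if_neg (by omega), mul_zero]
        · intro h
          exact absurd (Finset.mem_range.2 (by omega)) h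
    · rw [if_neg hij]
      rw [Matrix.one_apply_ne (fun h => hij (by rw [h])), add_zero]
      rw [Finset.sum_eq_zero]
      intro k _
      rw [if_neg (by omega), mul_zero]

lemma lieMat_mul_row (a : ℝ) (c : Fin n → ℝ) (E : Matrix (Fin (n + 1)) (Fin (n + 1)) ℝ)
    (i j : Fin (n + 1)) :
    (lieMat n a c * E) i j =
      (if h : (i : ℕ) < n then c ⟨n - 1 - i, by omega⟩ * E (Fin.last n) j else 0) +
      (if h : (i : ℕ) + 1 < n then a * E ⟨(i : ℕ) + 1, by omega⟩ j else 0) := by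
  rw [Matrix.mul_apply]
  by_cases hi : (i : ℕ) < n
  · rw [dif_pos hi]
    by_cases hin : (i : ℕ) + 1 < n
    · rw [dif_pos hin]
      have hne : (⟨(i : ℕ) + 1, by omega⟩ : Fin (n + 1)) ≠ Fin.last n := by
        simp only [ne_eq, Fin.ext_iff, Fin.val_last]; omega
      rw [← Finset.sum_erase_add _ _ (Finset.mem_univ (Fin.last n))]
      rw [add_comm]
      congr 1
      · simp only [lieMat, Matrix.of_apply, Fin.val_last]
        simp [dif_pos hi]
      · rw [Finset.sum_eq_single_of_mem (⟨(i : ℕ) + 1, by omega⟩ : Fin (n + 1))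
          (Finset.mem_erase.2 ⟨hne, Finset.mem_univ _⟩)]
        · have : lieMat n a c i ⟨(i : ℕ) + 1, by omega⟩ = a := by
            simp only [lieMat, Matrix.of_apply]
            rw [if_neg (by simpa using (by omega : ¬ ((i:ℕ) + 1 = n)))]
            simp
          rw [this]
        · intro m hm hm2
          have hmn : (m : ℕ) ≠ n := by
            intro h
            exact (Finset.mem_erase.1 hm).1 (by simp only [Fin.ext_iff, Fin.val_last]; exact h)
          have : lieMat n a c i m = 0 := by
            simp only [lieMat, Matrix.of_apply]
            rw [if_neg hmn, if_neg (fun h => hm2 (by simp only [Fin.ext_iff]; exact h))]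
          rw [this, zero_mul]
    · rw [dif_neg hin]
      rw [add_zero]
      rw [Finset.sum_eq_single_of_mem (Fin.last n) (Finset.mem_univ _)]
      · simp only [lieMat, Matrix.of_apply, Fin.val_last]
        simp [dif_pos hi]
      · intro m _ hm2
        have hmn : (m : ℕ) ≠ n := fun h => hm2 (by simp only [Fin.ext_iff, Fin.val_last]; exact h)
        have : lieMat n a c i m = 0 := by
          simp only [lieMat, Matrix.of_apply]
          rw [if_neg hmn, if_neg (by omega)]
        rw [this, zero_mul]
  · rw [dif_neg hi, dif_neg (by omega), add_zero]
    have hlast : i = Fin.last n := by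
      simp only [Fin.ext_iff, Fin.val_last]; have := i.isLt; omega
    rw [hlast]
    exact Finset.sum_eq_zero fun m _ => by rw [lieMat_last_row, zero_mul]

lemma Emat_last_col (x : ℝ) (y : Fin n → ℝ) : Emat n x y (Fin.last n) (Fin.last n) = 1 := by
  simp [Emat]

lemma Emat_last_row (x : ℝ) (y : Fin n → ℝ) (j : Fin (n + 1)) (hj : (j : ℕ) ≠ n) :
    Emat n x y (Fin.last n) j = 0 := by
  simp only [Emat, Matrix.of_apply, Fin.val_last]
  rw [dif_neg hj, if_neg (by have := j.isLt; omega)]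

/-- Extension of a `Fin n`-indexed family to `ℕ` by zero. -/
noncomputable def natExt {n : ℕ} (f : Fin n → ℝ) : ℕ → ℝ := fun v =>
  if h : v < n then f ⟨v, h⟩ else 0

lemma natExt_eq {n : ℕ} (f : Fin n → ℝ) {v : ℕ} (h : v < n) : natExt f v = f ⟨v, h⟩ :=
  dif_pos h

lemma lieMat_apply_last (a : ℝ) (b : Fin n → ℝ) (m : Fin (n + 1)) :
    lieMat n a b m (Fin.last n) = (if (m : ℕ) < n then natExt b (n - 1 - m) else 0) := by
  simp only [lieMat, Matrix.of_apply, Fin.val_last, if_pos trivial]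
  by_cases hm : (m : ℕ) < n
  · rw [dif_pos hm, if_pos hm, natExt_eq b (by omega)]
  · rw [dif_neg hm, if_neg hm]

lemma Emat_apply_ne (x : ℝ) (y : Fin n → ℝ) (i j : Fin (n + 1)) (hj : (j : ℕ) ≠ n) :
    Emat n x y i j =
      (if (i : ℕ) ≤ (j : ℕ) then x ^ ((j : ℕ) - i) / ((j : ℕ) - i)! else 0) := by
  simp only [Emat, Matrix.of_apply]
  rw [dif_neg hj]

lemma Emat_apply_last (x : ℝ) (y : Fin n → ℝ) (i : Fin (n + 1)) (hi : (i : ℕ) < n) :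
    Emat n x y i (Fin.last n) =
      ∑ k ∈ Finset.range (n - i), x ^ k / (k + 1)! * natExt y (n - 1 - i - k) := by
  simp only [Emat, Matrix.of_apply, Fin.val_last]
  rw [dif_pos trivial, dif_neg (by omega)]
  exact Finset.sum_congr rfl fun k hk => by
    simp only [Finset.mem_range] at hk
    rw [natExt_eq y (by omega)]

/-- The transformed `Y`-components. -/
noncomputable def xiFun (n : ℕ) (x a : ℝ) (y b : Fin n → ℝ) : Fin n → ℝ := fun j =>
  b j + ∑ k ∈ Finset.Icc 1 j.val,
    x ^ (k - 1) / k ! *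
      (x * b ⟨j.val - k, lt_of_le_of_lt (Nat.sub_le _ _) j.isLt⟩
        - a * y ⟨j.val - k, lt_of_le_of_lt (Nat.sub_le _ _) j.isLt⟩)

lemma xiFun_eq (x a : ℝ) (y b : Fin n → ℝ) (j : Fin n) :
    xiFun n x a y b j = natExt b j +
      ∑ t ∈ Finset.range (j : ℕ),
        x ^ t / (t + 1)! * (x * natExt b ((j : ℕ) - 1 - t) - a * natExt y ((j : ℕ) - 1 - t)) := by
  simp only [xiFun]
  congr 1
  · rw [natExt_eq b j.isLt]
  · rw [show Finset.Icc 1 (j : ℕ) = Finset.Ico 1 ((j : ℕ) + 1) from (Finset.Ico_add_one_right_eq_Icc _ _).symm,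
      Finset.sum_Ico_eq_sum_range, show (j : ℕ) + 1 - 1 = (j : ℕ) from rfl]
    refine Finset.sum_congr rfl fun t ht => ?_
    simp only [Finset.mem_range] at ht
    rw [natExt_eq b (by omega), natExt_eq y (by omega),
      show (1 : ℕ) + t - 1 = t from by omega, show (1 + t)! = (t + 1)! from by rw [Nat.add_comm],
      fcongr b _ _ (show (j:ℕ) - (1 + t) = (j:ℕ) - 1 - t from by omega),
      fcongr y _ _ (show (j:ℕ) - (1 + t) = (j:ℕ) - 1 - t from by omega)]

lemma comm_key (x a : ℝ) (y b : Fin n → ℝ) :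
    Emat n x y * lieMat n a b = lieMat n a (xiFun n x a y b) * Emat n x y := by
  ext i j
  rw [lieMat_mul_row, Matrix.mul_apply]
  by_cases hj : (j : ℕ) = n
  · have hj' : j = Fin.last n := by simp only [Fin.ext_iff, Fin.val_last]; exact hj
    subst hj'
    by_cases hi : (i : ℕ) < n
    · -- main case
      rw [dif_pos hi, Emat_last_col, mul_one]
      have hL : (∑ m : Fin (n + 1), Emat n x y i m * lieMat n a b m (Fin.last n)) =
          ∑ u ∈ Finset.range (n + 1),
            (fun u => if (i : ℕ) ≤ u ∧ u < n then
              x ^ (u - (i : ℕ)) / (u - (i : ℕ))! * natExt b (n - 1 - u) else 0) u := by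
        rw [← Fin.sum_univ_eq_sum_range]
        refine Finset.sum_congr rfl fun m _ => ?_
        rw [lieMat_apply_last]
        by_cases hm : (m : ℕ) < n
        · rw [if_pos hm, Emat_apply_ne x y i m (by omega)]
          by_cases him : (i : ℕ) ≤ (m : ℕ)
          · rw [if_pos him, if_pos ⟨him, hm⟩]
          · rw [if_neg him, if_neg (by omega), zero_mul]
        · rw [if_neg hm, mul_zero, if_neg (by omega)]
      rw [hL]
      have hsub : Finset.Ico (i : ℕ) n ⊆ Finset.range (n + 1) := by
        intro u hu
        simp only [Finset.mem_Ico] at hu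
        exact Finset.mem_range.2 (by omega)
      rw [← Finset.sum_subset hsub (fun u hu hu2 =>
        if_neg (by simp only [Finset.mem_Ico] at hu2; omega))]
      rw [Finset.sum_Ico_eq_sum_range]
      rw [show n - (i : ℕ) = (n - 1 - i) + 1 from by omega, Finset.sum_range_succ']
      rw [if_pos (show (i : ℕ) ≤ (i : ℕ) + 0 ∧ (i : ℕ) + 0 < n from by omega)]
      rw [show (i : ℕ) + 0 - (i : ℕ) = 0 from by omega, pow_zero, Nat.factorial_zero,
        Nat.cast_one, div_one, one_mul, show n - 1 - ((i:ℕ) + 0) = n - 1 - (i:ℕ) from by omega]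
      -- now unfold the ξ side
      rw [xiFun_eq]
      rw [show ((⟨n - 1 - (i : ℕ), by omega⟩ : Fin n) : ℕ) = n - 1 - (i : ℕ) from rfl]
      by_cases hin : (i : ℕ) + 1 < n
      · rw [dif_pos hin, Emat_apply_last x y _ (by exact hin)]
        rw [show ((⟨(i : ℕ) + 1, by omega⟩ : Fin (n + 1)) : ℕ) = (i : ℕ) + 1 from rfl]
        rw [show n - ((i : ℕ) + 1) = n - 1 - (i : ℕ) from by omega]
        rw [Finset.mul_sum, add_assoc, ← Finset.sum_add_distrib, add_comm]
        congr 1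
        refine Finset.sum_congr rfl fun t ht => ?_
        simp only [Finset.mem_range] at ht
        rw [if_pos (show (i : ℕ) ≤ (i : ℕ) + (t + 1) ∧ (i : ℕ) + (t + 1) < n from by omega)]
        rw [show (i : ℕ) + (t + 1) - (i : ℕ) = t + 1 from by omega]
        rw [show n - 1 - ((i : ℕ) + (t + 1)) = n - 1 - (i : ℕ) - 1 - t from by omega]
        rw [show n - 1 - ((i : ℕ) + 1) - t = n - 1 - (i : ℕ) - 1 - t from by omega]
        rw [pow_succ]
        ring
      · rw [dif_neg hin]
        have h0 : n - 1 - (i : ℕ) = 0 := by omega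
        rw [h0]
        simp
    · -- i = last row: everything vanishes
      have hlast : i = Fin.last n := by
        simp only [Fin.ext_iff, Fin.val_last]; have := i.isLt; omega
      subst hlast
      rw [dif_neg (by simp only [Fin.val_last]; omega),
        dif_neg (by simp only [Fin.val_last]; omega), add_zero]
      refine Finset.sum_eq_zero fun m _ => ?_
      by_cases hm : (m : ℕ) < n
      · rw [Emat_last_row x y m (by omega), zero_mul]
      · rw [lieMat_apply_last, if_neg hm, mul_zero]
  · -- j ≠ n
    have h1 : (if h : (i : ℕ) < n then
        xiFun n x a y b ⟨n - 1 - i, by omega⟩ * Emat n x y (Fin.last n) j else 0) = 0 := by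
      split
      · rw [Emat_last_row _ _ _ hj, mul_zero]
      · rfl
    rw [h1, zero_add]
    have hjn : (j : ℕ) < n := by have := j.isLt; omega
    by_cases hj0 : (j : ℕ) = 0
    · rw [Finset.sum_eq_zero (fun m _ => by
        have : lieMat n a b m j = 0 := by
          simp only [lieMat, Matrix.of_apply]
          rw [if_neg hj, if_neg (by omega)]
        rw [this, mul_zero])]
      symm
      refine dite_eq_right_iff.2 fun h => ?_
      rw [Emat_apply_ne x y _ j hj,
        if_neg (show ¬(((⟨(i:ℕ)+1, by omega⟩ : Fin (n+1)) : ℕ) ≤ (j : ℕ)) from by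
          rw [show ((⟨(i:ℕ)+1, by omega⟩ : Fin (n+1)) : ℕ) = (i:ℕ)+1 from rfl]; omega),
        mul_zero]
    · rw [Finset.sum_eq_single (⟨(j : ℕ) - 1, by omega⟩ : Fin (n + 1))]
      · have h2 : lieMat n a b (⟨(j : ℕ) - 1, by omega⟩ : Fin (n + 1)) j = a := by
          simp only [lieMat, Matrix.of_apply]
          rw [if_neg hj, if_pos (show (j:ℕ) = (((⟨(j : ℕ) - 1, by omega⟩ : Fin (n+1))) : ℕ) + 1 from by
            rw [show ((⟨(j : ℕ) - 1, by omega⟩ : Fin (n + 1)) : ℕ) = (j:ℕ) - 1 from rfl]; omega)]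
        rw [h2, Emat_apply_ne x y i _ (show ((⟨(j : ℕ) - 1, by omega⟩ : Fin (n+1)) : ℕ) ≠ n from by
          rw [show ((⟨(j : ℕ) - 1, by omega⟩ : Fin (n + 1)) : ℕ) = (j:ℕ) - 1 from rfl]; omega)]
        rw [show ((⟨(j : ℕ) - 1, by omega⟩ : Fin (n + 1)) : ℕ) = (j : ℕ) - 1 from rfl]
        by_cases hin : (i : ℕ) + 1 < n
        · rw [dif_pos hin, Emat_apply_ne x y _ j hj,
            show ((⟨(i : ℕ) + 1, by omega⟩ : Fin (n + 1)) : ℕ) = (i : ℕ) + 1 from rfl]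
          by_cases him : (i : ℕ) + 1 ≤ (j : ℕ)
          · rw [if_pos him, if_pos (by omega),
              show (j : ℕ) - 1 - i = (j : ℕ) - ((i : ℕ) + 1) from by omega]
            ring
          · rw [if_neg him, if_neg (by omega), zero_mul, mul_zero]
        · rw [dif_neg hin, if_neg (by omega), zero_mul]
      · intro m _ hm
        have : lieMat n a b m j = 0 := by
          simp only [lieMat, Matrix.of_apply]
          rw [if_neg hj, if_neg (by
            intro h
            exact hm (by simp only [Fin.ext_iff]; omega))]
        rw [this, mul_zero]
      · intro h; exact absurd (Finset.mem_univ _) h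

end AdAux

/-- for `w = exp(x·X + Σ y_i·Y_i) ∈ G_{n+1}` and
`W = a·X + Σ b_i·Y_i ∈ g_{n+1}`, the adjoint action `Ad_w W = w W w⁻¹` lies in
`g_{n+1}`, with `X`-component `a` and `Y_j`-components
`ξ_j = b_j + Σ_{k=1}^{j-1} (x^{k-1}/k!)(x b_{j-k} - a y_{j-k})`. -/
theorem ad_formula (n : ℕ) (x a : ℝ) (y b : Fin n → ℝ) :
    let w := NormedSpace.exp (lieMat n x y)
    w * lieMat n a b * w⁻¹ =
      lieMat n a (fun j =>
        b j + ∑ k ∈ Finset.Icc 1 j.val,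
          x ^ (k - 1) / k ! *
            (x * b ⟨j.val - k, lt_of_le_of_lt (Nat.sub_le _ _) j.isLt⟩
              - a * y ⟨j.val - k, lt_of_le_of_lt (Nat.sub_le _ _) j.isLt⟩)) := by
  intro w
  show w * lieMat n a b * w⁻¹ = lieMat n a (AdAux.xiFun n x a y b)
  have hw : w = AdAux.Emat n x y := AdAux.exp_eq_Emat x y
  have hcomm : w * lieMat n a b = lieMat n a (AdAux.xiFun n x a y b) * w := by
    rw [hw]; exact AdAux.comm_key x a y b
  have hinv : w⁻¹ = NormedSpace.exp (-(lieMat n x y)) := (Matrix.exp_neg _).symm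
  have hone : w * NormedSpace.exp (-(lieMat n x y)) = 1 := by
    show NormedSpace.exp (lieMat n x y) * _ = 1
    rw [← Matrix.exp_add_of_commute (lieMat n x y) (-(lieMat n x y)) (Commute.neg_right (Commute.refl _))]
    rw [add_neg_cancel, NormedSpace.exp_zero]
  rw [hcomm, mul_assoc, hinv, hone, mul_one]
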